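/- arXiv:2203.00118 — 4 statements merged into one kernel-verified Lean document; each statement's English description precedes it below -/
import Mathlib

section
/- Let K ⊆ ℝ³ be a nonempty compact set equal to the closure of its interior and let δ be a spin character of K. Then there exists a point p = (p₀, p₁, p₂) ∈ ℝ³ such that δ(z₀₁|_K) = p₁·1 − p₀·k, δ(z₀₂|_K) = p₂·1 − p₀·j, and δ(z₁₂|_K) = p₂·1 − p₁·i; that is, δ evaluates every monogenic coordinate function at one common point p of ℝ³. (Quaternionic form of the correspondence lemma: δ(z_{ij}) = z_{ij}(x_δ) for some x_δ ∈ ℝⁿ.) -/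
noncomputable section

abbrev R3 : Type := EuclideanSpace ℝ (Fin 3)

abbrev Quat := Quaternion ℝ

def e (m : Fin 3) : R3 := EuclideanSpace.single m 1

def qi : Quat := ⟨0, 1, 0, 0⟩
def qj : Quat := ⟨0, 0, 1, 0⟩
def qk : Quat := ⟨0, 0, 0, 1⟩

/-- `f` is monogenic on `U`. -/
def MonogenicOn (f : R3 → Quat) (U : Set R3) : Prop :=
  ∀ x ∈ U, DifferentiableAt ℝ f x ∧
    fderiv ℝ f x (e 0) + qk * fderiv ℝ f x (e 1) + qj * fderiv ℝ f x (e 2) = 0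

open Classical in
/-- Extension of a continuous map on `K` by zero. -/
def extendK (K : Set R3) (f : C(K, Quat)) : R3 → Quat :=
  fun x => if h : x ∈ K then f ⟨x, h⟩ else 0

/-- `f : C(K, Quat)` is monogenic on the interior of `K`. -/
def MonogenicOnInterior (K : Set R3) (f : C(K, Quat)) : Prop :=
  MonogenicOn (extendK K f) (interior K)

/-- `w` lies in the real plane `ℝ·1 + ℝ·q`. -/
def InPlane (q w : Quat) : Prop := ∃ a b : ℝ, w = a • 1 + b • q

/-- Plane-spinor fields on `K`. -/
def IsPlaneSpinor (K : Set R3) (f : C(K, Quat)) : Prop :=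
  ∃ q : Quat, q ^ 2 = -1 ∧ (∀ x, InPlane q (f x)) ∧ MonogenicOnInterior K f

/-- Spin characters of `K`. -/
structure IsSpinCharacter (K : Set R3) (δ : C(K, Quat) → Quat) : Prop where
  continuous : Continuous δ
  map_add : ∀ f g : C(K, Quat), δ (f + g) = δ f + δ g
  map_smul_right : ∀ (f : C(K, Quat)) (a : Quat), δ (f * ContinuousMap.const _ a) = δ f * a
  map_one : δ 1 = 1
  grade_real : ∀ f : C(K, Quat), (∀ x, ∃ a : ℝ, f x = (a : ℝ) • 1) → ∃ a : ℝ, δ f = (a : ℝ) • 1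
  grade_imaginary : ∀ f : C(K, Quat), (∀ x, (f x).re = 0) → (δ f).re = 0
  map_list_prod : ∀ L : List C(K, Quat), (∀ f ∈ L, IsPlaneSpinor K f) →
    δ L.prod = (L.map δ).prod

/-- The monogenic spinor fields 𝓜⁺(K): the closure in `C(K, Quat)` of restrictions of
functions monogenic on an open neighborhood of `K`. -/
def MonSpinorFields (K : Set R3) : Set C(K, Quat) :=
  closure { f : C(K, Quat) | ∃ U : Set R3, ∃ F : R3 → Quat,
    IsOpen U ∧ K ⊆ U ∧ MonogenicOn F U ∧ ∀ x : K, f x = F x }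

/-- A compact region in ℝ³. -/
def IsCompactRegion (K : Set R3) : Prop :=
  K.Nonempty ∧ IsCompact K ∧ K = closure (interior K) ∧ IsConnected Kᶜ


/-- The monogenic coordinate function `z₀₁(x) = x₁·1 − x₀·k`. -/
def z01 : R3 → Quat := fun x => (x 1) • (1 : Quat) - (x 0) • qk

/-- The monogenic coordinate function `z₀₂(x) = x₂·1 − x₀·j`. -/
def z02 : R3 → Quat := fun x => (x 2) • (1 : Quat) - (x 0) • qj

/-- The monogenic coordinate function `z₁₂(x) = x₂·1 − x₁·i`. -/
def z12 : R3 → Quat := fun x => (x 2) • (1 : Quat) - (x 1) • qi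

lemma z01_continuous : Continuous z01 :=
  (((EuclideanSpace.proj (1 : Fin 3)).continuous).smul continuous_const).sub
    (((EuclideanSpace.proj (0 : Fin 3)).continuous).smul continuous_const)

lemma z02_continuous : Continuous z02 :=
  (((EuclideanSpace.proj (2 : Fin 3)).continuous).smul continuous_const).sub
    (((EuclideanSpace.proj (0 : Fin 3)).continuous).smul continuous_const)

lemma z12_continuous : Continuous z12 :=
  (((EuclideanSpace.proj (2 : Fin 3)).continuous).smul continuous_const).sub
    (((EuclideanSpace.proj (1 : Fin 3)).continuous).smul continuous_const)

/-- The restriction of `z₀₁` to `K` as a continuous map. -/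
def z01K (K : Set R3) : C(K, Quat) := ContinuousMap.restrict K ⟨z01, z01_continuous⟩

/-- The restriction of `z₀₂` to `K` as a continuous map. -/
def z02K (K : Set R3) : C(K, Quat) := ContinuousMap.restrict K ⟨z02, z02_continuous⟩

/-- The restriction of `z₁₂` to `K` as a continuous map. -/
def z12K (K : Set R3) : C(K, Quat) := ContinuousMap.restrict K ⟨z12, z12_continuous⟩


/-- Correspondence lemma: a spin character evaluates the monogenic coordinate functions
at a common point of ℝ³. -/
theorem character_determines_point (K : Set R3) (hne : K.Nonempty)
    (hc : IsCompact K) (hreg : K = closure (interior K))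
    (δ : C(K, Quat) → Quat) (hδ : IsSpinCharacter K δ) :
    ∃ p : R3,
      δ (z01K K) = (p 1) • (1 : Quat) - (p 0) • qk ∧
      δ (z02K K) = (p 2) • (1 : Quat) - (p 0) • qj ∧
      δ (z12K K) = (p 2) • (1 : Quat) - (p 1) • qi := by
  -- coordinate functions as continuous maps on K
  let c : Fin 3 → C(K, Quat) := fun m =>
    ContinuousMap.restrict K ⟨fun x => (x m) • (1 : Quat),
      ((EuclideanSpace.proj m).continuous).smul continuous_const⟩
  -- δ is subtraction-preserving
  have hsub : ∀ f g : C(K, Quat), δ (f - g) = δ f - δ g := by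
    intro f g
    have := hδ.map_add g (f - g)
    rw [add_sub_cancel] at this
    rw [this]; abel
  -- δ (c m) is real
  have hreal : ∀ m : Fin 3, ∃ a : ℝ, δ (c m) = (a : ℝ) • 1 := by
    intro m
    exact hδ.grade_real (c m) (fun x => ⟨x.1 m, rfl⟩)
  obtain ⟨p0, hp0⟩ := hreal 0
  obtain ⟨p1, hp1⟩ := hreal 1
  obtain ⟨p2, hp2⟩ := hreal 2
  refine ⟨(WithLp.equiv 2 (Fin 3 → ℝ)).symm ![p0, p1, p2], ?_, ?_, ?_⟩
  · have hz : z01K K = c 1 - (c 0) * ContinuousMap.const _ qk := by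
      refine ContinuousMap.ext fun x => ?_
      show z01 (x : R3) = _
      simp only [ContinuousMap.sub_apply, ContinuousMap.mul_apply,
        ContinuousMap.const_apply, ContinuousMap.restrict_apply, ContinuousMap.coe_mk]
      simp only [c, ContinuousMap.restrict_apply, ContinuousMap.coe_mk,
        smul_mul_assoc, one_mul]
      show z01 (x : R3) = ((x : R3) 1 • (1 : Quat)) - ((x : R3) 0 • (1 : Quat)) * qk
      rw [smul_mul_assoc, one_mul]; rfl
    rw [hz, hsub, hδ.map_smul_right, hp0, hp1, smul_mul_assoc, one_mul]
    rfl
  · have hz : z02K K = c 2 - (c 0) * ContinuousMap.const _ qj := by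
      refine ContinuousMap.ext fun x => ?_
      show z02 (x : R3) = _
      simp only [ContinuousMap.sub_apply, ContinuousMap.mul_apply,
        ContinuousMap.const_apply, ContinuousMap.restrict_apply, ContinuousMap.coe_mk]
      simp only [c, ContinuousMap.restrict_apply, ContinuousMap.coe_mk,
        smul_mul_assoc, one_mul]
      show z02 (x : R3) = ((x : R3) 2 • (1 : Quat)) - ((x : R3) 0 • (1 : Quat)) * qj
      rw [smul_mul_assoc, one_mul]; rfl
    rw [hz, hsub, hδ.map_smul_right, hp0, hp2, smul_mul_assoc, one_mul]
    rfl
  · have hz : z12K K = c 2 - (c 1) * ContinuousMap.const _ qi := by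
      refine ContinuousMap.ext fun x => ?_
      show z12 (x : R3) = _
      simp only [ContinuousMap.sub_apply, ContinuousMap.mul_apply,
        ContinuousMap.const_apply, ContinuousMap.restrict_apply, ContinuousMap.coe_mk]
      simp only [c, ContinuousMap.restrict_apply, ContinuousMap.coe_mk,
        smul_mul_assoc, one_mul]
      show z12 (x : R3) = ((x : R3) 2 • (1 : Quat)) - ((x : R3) 1 • (1 : Quat)) * qi
      rw [smul_mul_assoc, one_mul]; rfl
    rw [hz, hsub, hδ.map_smul_right, hp1, hp2, smul_mul_assoc, one_mul]
    rfl

end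
end

section
/- Let K be a compact region in ℝ³, let δ be a spin character of K, and suppose p ∈ ℝ³ satisfies δ(z₀₁|_K) = z₀₁(p), δ(z₀₂|_K) = z₀₂(p), and δ(z₁₂|_K) = z₁₂(p). Then p ∈ K. (Quaternionic form of the identification lemma: the point produced by the correspondence lemma lies in the region itself.) -/
noncomputable section

/-! ### Auxiliary machinery for the identification lemma -/

lemma qi_sq : qi ^ 2 = -1 := by
  ext <;> simp [pow_two, Quaternion.re_mul, Quaternion.imI_mul, Quaternion.imJ_mul,
    Quaternion.imK_mul, Quaternion.re_one, Quaternion.imI_one, Quaternion.imJ_one, Quaternion.imK_one] <;> simp [qi]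

lemma qj_sq : qj ^ 2 = -1 := by
  ext <;> simp [pow_two, Quaternion.re_mul, Quaternion.imI_mul, Quaternion.imJ_mul,
    Quaternion.imK_mul, Quaternion.re_one, Quaternion.imI_one, Quaternion.imJ_one, Quaternion.imK_one] <;> simp [qj]

lemma qk_sq : qk ^ 2 = -1 := by
  ext <;> simp [pow_two, Quaternion.re_mul, Quaternion.imI_mul, Quaternion.imJ_mul,
    Quaternion.imK_mul, Quaternion.re_one, Quaternion.imI_one, Quaternion.imJ_one, Quaternion.imK_one] <;> simp [qk]

lemma qk_mul_qi : qk * qi = qj := by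
  ext <;> simp [Quaternion.re_mul, Quaternion.imI_mul, Quaternion.imJ_mul,
    Quaternion.imK_mul] <;> simp [qi, qj, qk]

/-- `w ⋅ (conjugation of w by r)` computations: `q = k`, conjugator `i`. -/
lemma quat_word_k (α β : ℝ) :
    (α • (1:Quat) + β • qk) * qi * (α • (1:Quat) + β • qk) * (-qi) = (α ^ 2 + β ^ 2) • 1 := by
  ext <;> simp [Quaternion.re_mul, Quaternion.imI_mul, Quaternion.imJ_mul,
    Quaternion.imK_mul, Quaternion.re_one, Quaternion.imI_one, Quaternion.imJ_one, Quaternion.imK_one] <;> simp [qi, qk] <;> ring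

/-- `q = j`, conjugator `i`. -/
lemma quat_word_j (α β : ℝ) :
    (α • (1:Quat) + β • qj) * qi * (α • (1:Quat) + β • qj) * (-qi) = (α ^ 2 + β ^ 2) • 1 := by
  ext <;> simp [Quaternion.re_mul, Quaternion.imI_mul, Quaternion.imJ_mul,
    Quaternion.imK_mul, Quaternion.re_one, Quaternion.imI_one, Quaternion.imJ_one, Quaternion.imK_one] <;> simp [qi, qj] <;> ring

/-- `q = i`, conjugator `j`. -/
lemma quat_word_i (α β : ℝ) :
    (α • (1:Quat) + β • qi) * qj * (α • (1:Quat) + β • qi) * (-qj) = (α ^ 2 + β ^ 2) • 1 := by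
  ext <;> simp [Quaternion.re_mul, Quaternion.imI_mul, Quaternion.imJ_mul,
    Quaternion.imK_mul, Quaternion.re_one, Quaternion.imI_one, Quaternion.imJ_one, Quaternion.imK_one] <;> simp [qi, qj] <;> ring

/-- The linear part of the monogenic coordinate functions, as a continuous linear map. -/
def Lmap (a b : Fin 3) (q : Quat) : R3 →L[ℝ] Quat :=
  (EuclideanSpace.proj b).smulRight (1:Quat) - (EuclideanSpace.proj a).smulRight q

lemma Lmap_apply (a b : Fin 3) (q : Quat) (x : R3) :
    Lmap a b q x = (x b) • (1:Quat) - (x a) • q := by simp [Lmap]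

/-- A continuous map on `K` which agrees with a globally monogenic plane-valued function
is a plane spinor. -/
lemma isPlaneSpinor_of_global (K : Set R3) (f : C(K, Quat)) (G : R3 → Quat)
    (hfG : ∀ y : K, f y = G y) (q : Quat) (hq : q ^ 2 = -1)
    (hplane : ∀ x, InPlane q (G x)) (hdiff : Differentiable ℝ G)
    (hdirac : ∀ x, fderiv ℝ G x (e 0) + qk * fderiv ℝ G x (e 1) + qj * fderiv ℝ G x (e 2) = 0) :
    IsPlaneSpinor K f := by
  refine ⟨q, hq, fun x => by rw [hfG]; exact hplane x, ?_⟩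
  intro x hx
  have hev : extendK K f =ᶠ[nhds x] G := by
    filter_upwards [isOpen_interior.mem_nhds hx] with y hy
    have hyK : y ∈ K := interior_subset hy
    simp [extendK, hyK, hfG ⟨y, hyK⟩]
  refine ⟨(hdiff x).congr_of_eventuallyEq hev, ?_⟩
  rw [hev.fderiv_eq]
  exact hdirac x

/-- Constant functions with value in a plane are plane spinors. -/
lemma isPlaneSpinor_const (K : Set R3) (q a : Quat) (hq : q ^ 2 = -1) (ha : InPlane q a) :
    IsPlaneSpinor K (ContinuousMap.const _ a) := by
  refine isPlaneSpinor_of_global K _ (fun _ => a) (fun _ => rfl) q hq (fun _ => ha)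
    (differentiable_const a) ?_
  intro x
  simp [fderiv_const]

/-- Affine coordinate-type functions are plane spinors. -/
lemma isPlaneSpinor_affine (K : Set R3) (a b : Fin 3) (q : Quat) (cα cβ : ℝ) (f : C(K, Quat))
    (hf : ∀ y : K, f y = Lmap a b q y - (cα • 1 + cβ • q)) (hq : q ^ 2 = -1)
    (hdir : Lmap a b q (e 0) + qk * (Lmap a b q (e 1)) + qj * (Lmap a b q (e 2)) = 0) :
    IsPlaneSpinor K f := by
  refine isPlaneSpinor_of_global K f (fun y => Lmap a b q y - (cα • 1 + cβ • q)) hf q hq ?_ ?_ ?_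
  · intro x
    refine ⟨x b - cα, -(x a) - cβ, ?_⟩
    simp only [Lmap_apply]
    module
  · exact ((Lmap a b q).differentiable).sub_const _
  · intro x
    rw [fderiv_sub_const, ContinuousLinearMap.fderiv]
    exact hdir


set_option maxHeartbeats 2000000

/-- Identification lemma: the point produced by the correspondence lemma lies in `K`. -/
theorem character_point_mem (K : Set R3) (hK : IsCompactRegion K)
    (δ : C(K, Quat) → Quat) (hδ : IsSpinCharacter K δ) (p : R3)
    (h01 : δ (z01K K) = z01 p) (h02 : δ (z02K K) = z02 p)
    (h12 : δ (z12K K) = z12 p) :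
    p ∈ K := by
  classical
  by_contra hp
  haveI : CompactSpace K := isCompact_iff_compactSpace.mp hK.2.1
  -- δ is ℝ-linear
  have hsmul : ∀ (r : ℝ) (f : C(K, Quat)), δ (r • f) = r • δ f := by
    intro r f
    have h1 : r • f = f * ContinuousMap.const _ (r • (1:Quat)) :=
      ContinuousMap.ext fun x => by simp [mul_smul_comm]
    rw [h1, hδ.map_smul_right, mul_smul_comm, mul_one]
  let δL : C(K, Quat) →ₗ[ℝ] Quat :=
    { toFun := δ, map_add' := hδ.map_add, map_smul' := hsmul }
  have hδ0 : δ (0 : C(K, Quat)) = 0 := δL.map_zero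
  have hsub : ∀ f g : C(K, Quat), δ (f - g) = δ f - δ g := fun f g => δL.map_sub f g
  have hconst : ∀ a : Quat, δ (ContinuousMap.const _ a) = a := by
    intro a
    have h1 : (1 : C(K, Quat)) * ContinuousMap.const _ a = ContinuousMap.const _ a :=
      ContinuousMap.ext fun x => by simp
    rw [← h1, hδ.map_smul_right, hδ.map_one, one_mul]
  -- the shifted coordinate functions
  set ZkK : C(K, Quat) := z01K K - ContinuousMap.const _ (z01 p) with hZkK
  set ZjK : C(K, Quat) := z02K K - ContinuousMap.const _ (z02 p) with hZjK
  set ZiK : C(K, Quat) := z12K K - ContinuousMap.const _ (z12 p) with hZiK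
  have hZk0 : δ ZkK = 0 := by rw [hZkK, hsub, h01, hconst, sub_self]
  have hZj0 : δ ZjK = 0 := by rw [hZjK, hsub, h02, hconst, sub_self]
  have hZi0 : δ ZiK = 0 := by rw [hZiK, hsub, h12, hconst, sub_self]
  -- they are plane spinors
  have hZkapp : ∀ y : K, ZkK y = ((y:R3) 1 - p 1) • (1:Quat) + (-((y:R3) 0 - p 0)) • qk := by
    intro y
    show z01 y - z01 p = _
    simp only [z01]
    module
  have hZjapp : ∀ y : K, ZjK y = ((y:R3) 2 - p 2) • (1:Quat) + (-((y:R3) 0 - p 0)) • qj := by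
    intro y
    show z02 y - z02 p = _
    simp only [z02]
    module
  have hZiapp : ∀ y : K, ZiK y = ((y:R3) 2 - p 2) • (1:Quat) + (-((y:R3) 1 - p 1)) • qi := by
    intro y
    show z12 y - z12 p = _
    simp only [z12]
    module
  have hspinZk : IsPlaneSpinor K ZkK := by
    refine isPlaneSpinor_affine K 0 1 qk (p 1) (-(p 0)) ZkK ?_ qk_sq ?_
    · intro y
      show z01 y - z01 p = _
      simp only [Lmap_apply, z01]
      module
    · simp [Lmap_apply, e, EuclideanSpace.single_apply]
  have hspinZj : IsPlaneSpinor K ZjK := by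
    refine isPlaneSpinor_affine K 0 2 qj (p 2) (-(p 0)) ZjK ?_ qj_sq ?_
    · intro y
      show z02 y - z02 p = _
      simp only [Lmap_apply, z02]
      module
    · simp [Lmap_apply, e, EuclideanSpace.single_apply]
  have hspinZi : IsPlaneSpinor K ZiK := by
    refine isPlaneSpinor_affine K 1 2 qi (p 2) (-(p 1)) ZiK ?_ qi_sq ?_
    · intro y
      show z12 y - z12 p = _
      simp only [Lmap_apply, z12]
      module
    · simp [Lmap_apply, e, EuclideanSpace.single_apply, qk_mul_qi]
  have hspinCqi : IsPlaneSpinor K (ContinuousMap.const K qi) :=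
    isPlaneSpinor_const K qi qi qi_sq ⟨0, 1, by module⟩
  have hspinCnqi : IsPlaneSpinor K (ContinuousMap.const K (-qi)) :=
    isPlaneSpinor_const K qi (-qi) qi_sq ⟨0, -1, by module⟩
  have hspinCqj : IsPlaneSpinor K (ContinuousMap.const K qj) :=
    isPlaneSpinor_const K qj qj qj_sq ⟨0, 1, by module⟩
  have hspinCnqj : IsPlaneSpinor K (ContinuousMap.const K (-qj)) :=
    isPlaneSpinor_const K qj (-qj) qj_sq ⟨0, -1, by module⟩
  -- words with a δ-zero factor
  set Zset : Set C(K, Quat) := {f | ∃ L : List C(K, Quat),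
    (∀ g ∈ L, IsPlaneSpinor K g) ∧ ((0 : Quat) ∈ L.map δ) ∧ f = L.prod} with hZsetdef
  have hZker : ∀ f ∈ Zset, δ f = 0 := by
    rintro f ⟨L, hL, h0, rfl⟩
    rw [hδ.map_list_prod L hL]
    exact List.prod_eq_zero h0
  have hZmul : ∀ f ∈ Zset, ∀ g ∈ Zset, f * g ∈ Zset := by
    rintro f ⟨L1, hL1, hm1, rfl⟩ g ⟨L2, hL2, hm2, rfl⟩
    refine ⟨L1 ++ L2, ?_, ?_, (List.prod_append).symm⟩
    · intro g hg
      rcases List.mem_append.1 hg with h | h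
      exacts [hL1 _ h, hL2 _ h]
    · rw [List.map_append]
      exact List.mem_append.2 (Or.inl hm1)
  have hMker : ∀ v ∈ Submodule.span ℝ Zset, δ v = 0 := by
    intro v hv
    have hle : Submodule.span ℝ Zset ≤ LinearMap.ker δL :=
      Submodule.span_le.mpr fun f hf => LinearMap.mem_ker.mpr (hZker f hf)
    exact LinearMap.mem_ker.mp (hle hv)
  have hMmul : ∀ a ∈ Submodule.span ℝ Zset, ∀ b ∈ Submodule.span ℝ Zset,
      a * b ∈ Submodule.span ℝ Zset := by
    intro a ha b hb
    have h1 : a * b ∈ Submodule.span ℝ Zset * Submodule.span ℝ Zset :=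
      Submodule.mul_mem_mul ha hb
    rw [Submodule.span_mul_span] at h1
    refine Submodule.span_le.mpr ?_ h1
    rintro x ⟨f, hf, g, hg, rfl⟩
    exact Submodule.subset_span (hZmul f hf g hg)
  -- the three "squared distance" words
  set Wk : C(K, Quat) := ZkK * ContinuousMap.const K qi * ZkK * ContinuousMap.const K (-qi)
    with hWkdef
  set Wj : C(K, Quat) := ZjK * ContinuousMap.const K qi * ZjK * ContinuousMap.const K (-qi)
    with hWjdef
  set Wi : C(K, Quat) := ZiK * ContinuousMap.const K qj * ZiK * ContinuousMap.const K (-qj)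
    with hWidef
  have hWkZ : Wk ∈ Zset := by
    refine ⟨[ZkK, ContinuousMap.const K qi, ZkK, ContinuousMap.const K (-qi)], ?_, ?_, ?_⟩
    · intro g hg
      simp only [List.mem_cons, List.not_mem_nil, or_false] at hg
      rcases hg with rfl | rfl | rfl | rfl
      exacts [hspinZk, hspinCqi, hspinZk, hspinCnqi]
    · exact List.mem_map.mpr ⟨ZkK, by simp, hZk0⟩
    · simp [hWkdef, List.prod_cons, mul_assoc]
  have hWjZ : Wj ∈ Zset := by
    refine ⟨[ZjK, ContinuousMap.const K qi, ZjK, ContinuousMap.const K (-qi)], ?_, ?_, ?_⟩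
    · intro g hg
      simp only [List.mem_cons, List.not_mem_nil, or_false] at hg
      rcases hg with rfl | rfl | rfl | rfl
      exacts [hspinZj, hspinCqi, hspinZj, hspinCnqi]
    · exact List.mem_map.mpr ⟨ZjK, by simp, hZj0⟩
    · simp [hWjdef, List.prod_cons, mul_assoc]
  have hWiZ : Wi ∈ Zset := by
    refine ⟨[ZiK, ContinuousMap.const K qj, ZiK, ContinuousMap.const K (-qj)], ?_, ?_, ?_⟩
    · intro g hg
      simp only [List.mem_cons, List.not_mem_nil, or_false] at hg
      rcases hg with rfl | rfl | rfl | rfl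
      exacts [hspinZi, hspinCqj, hspinZi, hspinCnqj]
    · exact List.mem_map.mpr ⟨ZiK, by simp, hZi0⟩
    · simp [hWidef, List.prod_cons, mul_assoc]
  -- geometry: distances
  obtain ⟨r0, hr0⟩ := hK.2.1.isBounded.subset_closedBall p
  set d : ℝ := Metric.infDist p K with hd
  have hdpos : 0 < d := (hK.2.1.isClosed.notMem_iff_infDist_pos hK.1).1 hp
  set R : ℝ := max r0 d with hRdef
  have hdR : d ≤ R := le_max_right _ _
  have hRpos : 0 < R := lt_of_lt_of_le hdpos hdR
  have hKR : ∀ x : K, dist (x : R3) p ≤ R := by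
    intro x
    have h1 : (x : R3) ∈ Metric.closedBall p r0 := hr0 x.2
    rw [Metric.mem_closedBall] at h1
    exact le_trans h1 (le_max_left _ _)
  have hKd : ∀ x : K, d ≤ dist (x : R3) p := by
    intro x
    rw [hd, dist_comm]
    exact Metric.infDist_le_dist_of_mem x.2
  have hdist2 : ∀ x : R3,
      ((x 0 - p 0) ^ 2 + (x 1 - p 1) ^ 2 + (x 2 - p 2) ^ 2) = dist x p ^ 2 := by
    intro x
    rw [EuclideanSpace.dist_eq, Real.sq_sqrt (by positivity), Fin.sum_univ_three]
    simp [Real.dist_eq, sq_abs]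
  -- the contracting element
  set u : C(K, Quat) := (-(1 / (2 * R ^ 2))) • (Wk + Wj + Wi) with hudef
  have huM : u ∈ Submodule.span ℝ Zset :=
    Submodule.smul_mem _ _ (Submodule.add_mem _
      (Submodule.add_mem _ (Submodule.subset_span hWkZ) (Submodule.subset_span hWjZ))
      (Submodule.subset_span hWiZ))
  have hupt : ∀ x : K, ((1 : C(K, Quat)) + u) x = (1 - dist (x : R3) p ^ 2 / R ^ 2) • 1 := by
    intro x
    have hWkx : Wk x = ((((x:R3) 1 - p 1)) ^ 2 + (-((x:R3) 0 - p 0)) ^ 2) • (1 : Quat) := by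
      rw [hWkdef]
      simp only [ContinuousMap.mul_apply, ContinuousMap.const_apply]
      rw [hZkapp x, quat_word_k]
    have hWjx : Wj x = ((((x:R3) 2 - p 2)) ^ 2 + (-((x:R3) 0 - p 0)) ^ 2) • (1 : Quat) := by
      rw [hWjdef]
      simp only [ContinuousMap.mul_apply, ContinuousMap.const_apply]
      rw [hZjapp x, quat_word_j]
    have hWix : Wi x = ((((x:R3) 2 - p 2)) ^ 2 + (-((x:R3) 1 - p 1)) ^ 2) • (1 : Quat) := by
      rw [hWidef]
      simp only [ContinuousMap.mul_apply, ContinuousMap.const_apply]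
      rw [hZiapp x, quat_word_i]
    have hsum : (Wk + Wj + Wi) x = (2 * dist (x : R3) p ^ 2) • (1 : Quat) := by
      simp only [ContinuousMap.add_apply, hWkx, hWjx, hWix, ← add_smul]
      rw [← hdist2 (x : R3)]
      congr 1
      ring
    simp only [ContinuousMap.add_apply, ContinuousMap.one_apply, ContinuousMap.smul_apply,
      hudef, hsum, smul_smul]
    have harith : -(1 / (2 * R ^ 2)) * (2 * dist (x : R3) p ^ 2)
        = -(dist (x : R3) p ^ 2 / R ^ 2) := by
      field_simp
    rw [harith]
    have hone : (1 : Quat) = (1 : ℝ) • (1 : Quat) := (one_smul ℝ (1 : Quat)).symm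
    nth_rewrite 1 [hone]
    rw [← add_smul]
    congr 1
  -- norm bound
  set c : ℝ := 1 - d ^ 2 / R ^ 2 with hcdef
  have hc0 : 0 ≤ c := by
    have h1 : d ^ 2 ≤ R ^ 2 := pow_le_pow_left₀ hdpos.le hdR 2
    have h2 : d ^ 2 / R ^ 2 ≤ 1 := by
      rw [div_le_one (by positivity)]
      exact h1
    rw [hcdef]
    linarith
  have hc1 : c < 1 := by
    have h1 : 0 < d ^ 2 / R ^ 2 := by positivity
    rw [hcdef]
    linarith
  have hbound : ∀ n : ℕ, ‖((1 : C(K, Quat)) + u) ^ n‖ ≤ c ^ n := by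
    intro n
    rw [ContinuousMap.norm_le _ (pow_nonneg hc0 n)]
    intro x
    rw [ContinuousMap.pow_apply, hupt x, smul_pow, one_pow, norm_smul, norm_one, mul_one,
      norm_pow, Real.norm_eq_abs]
    have hx1 : dist (x : R3) p ^ 2 / R ^ 2 ≤ 1 := by
      rw [div_le_one (by positivity)]
      exact pow_le_pow_left₀ dist_nonneg (hKR x) 2
    have hx2 : d ^ 2 / R ^ 2 ≤ dist (x : R3) p ^ 2 / R ^ 2 := by
      apply div_le_div_of_nonneg_right ?_ (by positivity)
      · exact pow_le_pow_left₀ hdpos.le (hKd x) 2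
    have habs : |1 - dist (x : R3) p ^ 2 / R ^ 2| ≤ c := by
      rw [abs_of_nonneg (by linarith)]
      rw [hcdef]
      linarith
    exact pow_le_pow_left₀ (abs_nonneg _) habs n
  -- δ of all powers is 1
  have hδn : ∀ n : ℕ, δ (((1 : C(K, Quat)) + u) ^ n) = 1 := by
    intro n
    have hrep : ∃ v ∈ Submodule.span ℝ Zset, ((1 : C(K, Quat)) + u) ^ n = 1 + v := by
      induction n with
      | zero => exact ⟨0, Submodule.zero_mem _, by simp⟩
      | succ m ih =>
        obtain ⟨v, hv, hrepr⟩ := ih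
        refine ⟨u + v + v * u, ?_, ?_⟩
        · exact Submodule.add_mem _ (Submodule.add_mem _ huM hv) (hMmul v hv u huM)
        · rw [pow_succ, hrepr, mul_add, mul_one, add_mul, one_mul]
          abel
    obtain ⟨v, hv, hrepr⟩ := hrep
    rw [hrepr, hδ.map_add, hδ.map_one, hMker v hv, add_zero]
  -- contradiction by continuity
  have htend0 : Filter.Tendsto (fun n : ℕ => ((1 : C(K, Quat)) + u) ^ n)
      Filter.atTop (nhds 0) :=
    squeeze_zero_norm hbound (tendsto_pow_atTop_nhds_zero_of_lt_one hc0 hc1)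
  have htendδ : Filter.Tendsto (fun n : ℕ => δ (((1 : C(K, Quat)) + u) ^ n))
      Filter.atTop (nhds (δ 0)) :=
    (hδ.continuous.tendsto 0).comp htend0
  rw [hδ0] at htendδ
  simp only [hδn] at htendδ
  have : (1 : Quat) = 0 := tendsto_nhds_unique tendsto_const_nhds htendδ
  exact one_ne_zero this


end
end

section
/- Let K ⊆ ℝ³ be a nonempty compact set. Then the smallest ℝ-subalgebra of C(K, ℍ) containing 𝓜⁺(K) is dense in C(K, ℍ) for the supremum norm. (Stone–Weierstrass theorem for monogenic spinor fields, three-dimensional quaternionic case: the algebra generated by the closure of the monogenic spinor fields is dense in the continuous spinor fields.) -/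
noncomputable section

/-! ### Auxiliary material for the proof -/

def L1 : R3 →L[ℝ] Quat :=
  ((EuclideanSpace.proj (1 : Fin 3) : R3 →L[ℝ] ℝ).smulRight (1 : Quat)) -
  ((EuclideanSpace.proj (0 : Fin 3) : R3 →L[ℝ] ℝ).smulRight qk)

def L2 : R3 →L[ℝ] Quat :=
  ((EuclideanSpace.proj (2 : Fin 3) : R3 →L[ℝ] ℝ).smulRight (1 : Quat)) -
  ((EuclideanSpace.proj (0 : Fin 3) : R3 →L[ℝ] ℝ).smulRight qj)

lemma L1_apply (x : R3) : L1 x = (x 1) • 1 - (x 0) • qk := by simp [L1]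

lemma L2_apply (x : R3) : L2 x = (x 2) • 1 - (x 0) • qj := by simp [L2]

lemma monogenicOn_L1 : MonogenicOn (⇑L1) Set.univ := by
  intro x _
  refine ⟨L1.differentiableAt, ?_⟩
  rw [L1.fderiv]
  simp [L1_apply, e, EuclideanSpace.single_apply]

lemma monogenicOn_L2 : MonogenicOn (⇑L2) Set.univ := by
  intro x _
  refine ⟨L2.differentiableAt, ?_⟩
  rw [L2.fderiv]
  simp [L2_apply, e, EuclideanSpace.single_apply]

lemma const_mem_mon (K : Set R3) (c : Quat) :
    ContinuousMap.const K c ∈ MonSpinorFields K := by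
  apply subset_closure
  refine ⟨Set.univ, fun _ => c, isOpen_univ, Set.subset_univ K, ?_, fun _ => rfl⟩
  intro x _
  refine ⟨differentiableAt_const c, ?_⟩
  simp [fderiv_const]

def z1 (K : Set R3) : C(K, Quat) :=
  (ContinuousMap.mk ⇑L1 L1.continuous).restrict K

def z2 (K : Set R3) : C(K, Quat) :=
  (ContinuousMap.mk ⇑L2 L2.continuous).restrict K

lemma z1_apply (K : Set R3) (x : K) :
    z1 K x = ((x : R3) 1) • 1 - ((x : R3) 0) • qk := L1_apply _

lemma z2_apply (K : Set R3) (x : K) :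
    z2 K x = ((x : R3) 2) • 1 - ((x : R3) 0) • qj := L2_apply _

lemma z1_mem_mon (K : Set R3) : z1 K ∈ MonSpinorFields K := by
  apply subset_closure
  exact ⟨Set.univ, ⇑L1, isOpen_univ, Set.subset_univ K, monogenicOn_L1, fun _ => rfl⟩

lemma z2_mem_mon (K : Set R3) : z2 K ∈ MonSpinorFields K := by
  apply subset_closure
  exact ⟨Set.univ, ⇑L2, isOpen_univ, Set.subset_univ K, monogenicOn_L2, fun _ => rfl⟩

/-- The real coordinate functions, regarded as quaternion-valued maps. -/
def cq (K : Set R3) (m : Fin 3) : C(K, Quat) :=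
  ⟨fun x => ((x : R3) m) • 1,
    (((EuclideanSpace.proj m : R3 →L[ℝ] ℝ).continuous.comp
      continuous_subtype_val).smul continuous_const)⟩

lemma cq_apply (K : Set R3) (m : Fin 3) (x : K) : cq K m x = ((x : R3) m) • 1 := rfl

lemma qi_parts : qi.re = 0 ∧ qi.imI = 1 ∧ qi.imJ = 0 ∧ qi.imK = 0 := ⟨rfl, rfl, rfl, rfl⟩
lemma qj_parts : qj.re = 0 ∧ qj.imI = 0 ∧ qj.imJ = 1 ∧ qj.imK = 0 := ⟨rfl, rfl, rfl, rfl⟩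
lemma qk_parts : qk.re = 0 ∧ qk.imI = 0 ∧ qk.imJ = 0 ∧ qk.imK = 1 := ⟨rfl, rfl, rfl, rfl⟩

open scoped Quaternion QuaternionAlgebra in
lemma cq0_eq (K : Set R3) :
    cq K 0 = (1/2 : ℝ) • ((ContinuousMap.const K qj * z1 K -
      z1 K * ContinuousMap.const K qj) * ContinuousMap.const K qi) := by
  refine ContinuousMap.ext fun x => ?_
  simp only [ContinuousMap.smul_apply, ContinuousMap.mul_apply, ContinuousMap.sub_apply, ContinuousMap.add_apply, ContinuousMap.const_apply]
  apply Quaternion.ext <;> simp [cq_apply, z1_apply, qi_parts, qj_parts, qk_parts, smul_eq_mul, Quaternion.re_smul] <;> ring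

lemma cq0_mem (K : Set R3) : cq K 0 ∈ Algebra.adjoin ℝ (MonSpinorFields K) := by
  rw [cq0_eq]
  exact Subalgebra.smul_mem _
    (mul_mem (sub_mem (mul_mem (Algebra.subset_adjoin (const_mem_mon K qj))
      (Algebra.subset_adjoin (z1_mem_mon K)))
      (mul_mem (Algebra.subset_adjoin (z1_mem_mon K))
        (Algebra.subset_adjoin (const_mem_mon K qj))))
      (Algebra.subset_adjoin (const_mem_mon K qi))) _

open scoped Quaternion QuaternionAlgebra in
lemma cq1_eq (K : Set R3) : cq K 1 = z1 K + cq K 0 * ContinuousMap.const K qk := by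
  refine ContinuousMap.ext fun x => ?_
  simp only [ContinuousMap.smul_apply, ContinuousMap.mul_apply, ContinuousMap.sub_apply, ContinuousMap.add_apply, ContinuousMap.const_apply]
  apply Quaternion.ext <;> simp [cq_apply, z1_apply, qk_parts, Quaternion.re_smul] <;> ring

open scoped Quaternion QuaternionAlgebra in
lemma cq2_eq (K : Set R3) : cq K 2 = z2 K + cq K 0 * ContinuousMap.const K qj := by
  refine ContinuousMap.ext fun x => ?_
  simp only [ContinuousMap.smul_apply, ContinuousMap.mul_apply, ContinuousMap.sub_apply, ContinuousMap.add_apply, ContinuousMap.const_apply]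
  apply Quaternion.ext <;> simp [cq_apply, z2_apply, qj_parts, Quaternion.re_smul] <;> ring

lemma cq_mem (K : Set R3) (m : Fin 3) :
    cq K m ∈ Algebra.adjoin ℝ (MonSpinorFields K) := by
  fin_cases m
  · exact cq0_mem K
  · show cq K 1 ∈ _
    rw [cq1_eq]
    exact add_mem (Algebra.subset_adjoin (z1_mem_mon K))
      (mul_mem (cq0_mem K) (Algebra.subset_adjoin (const_mem_mon K qk)))
  · show cq K 2 ∈ _
    rw [cq2_eq]
    exact add_mem (Algebra.subset_adjoin (z2_mem_mon K))
      (mul_mem (cq0_mem K) (Algebra.subset_adjoin (const_mem_mon K qj)))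

/-- Post-composition with the algebra map `ℝ → ℍ`. -/
def Phi (K : Set R3) : C(K, ℝ) →ₐ[ℝ] C(K, Quat) :=
  (Algebra.ofId ℝ Quat).compLeftContinuous ℝ (continuous_algebraMap ℝ Quat)

lemma Phi_apply (K : Set R3) (g : C(K, ℝ)) (x : K) :
    Phi K g x = ((g x : ℝ) : Quat) := rfl

lemma Phi_continuous (K : Set R3) [CompactSpace K] : Continuous (Phi K) := by
  refine (LipschitzWith.of_dist_le_mul (K := 1) ?_).continuous
  intro g h
  rw [NNReal.coe_one, one_mul, ContinuousMap.dist_le dist_nonneg]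
  intro x
  have : dist (Phi K g x) (Phi K h x) = dist (g x) (h x) := by
    rw [Phi_apply, Phi_apply, dist_eq_norm, dist_eq_norm, ← Quaternion.coe_sub,
      Quaternion.norm_coe]
  rw [this]
  exact ContinuousMap.dist_apply_le_dist x


/-- Stone–Weierstrass theorem for monogenic spinor fields: the smallest ℝ-subalgebra of
`C(K, Quat)` containing 𝓜⁺(K) is dense in `C(K, Quat)`. -/
theorem stone_weierstrass_monogenic (K : Set R3) (hne : K.Nonempty) (hc : IsCompact K) :
    Dense ((Algebra.adjoin ℝ (MonSpinorFields K) : Subalgebra ℝ C(K, Quat)) :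
      Set C(K, Quat)) := by
  haveI : CompactSpace K := isCompact_iff_compactSpace.mp hc
  set A := Algebra.adjoin ℝ (MonSpinorFields K) with hA
  -- the real coordinate functions
  let cR : Fin 3 → C(K, ℝ) := fun m =>
    ⟨fun x => (x : R3) m,
      ((EuclideanSpace.proj m : R3 →L[ℝ] ℝ).continuous.comp continuous_subtype_val)⟩
  let B : Subalgebra ℝ C(K, ℝ) := Algebra.adjoin ℝ (Set.range cR)
  have hBsep : B.SeparatesPoints := by
    intro x y hxy
    have hxy' : (x : R3) ≠ (y : R3) := Subtype.coe_injective.ne hxy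
    obtain ⟨m, hm⟩ := Function.ne_iff.mp (fun h => hxy' (WithLp.ofLp_injective 2 h))
    exact ⟨cR m, ⟨cR m, Algebra.subset_adjoin ⟨m, rfl⟩, rfl⟩, hm⟩
  have hB : B.topologicalClosure = ⊤ :=
    ContinuousMap.subalgebra_topologicalClosure_eq_top_of_separatesPoints B hBsep
  -- Phi maps B into A
  have hΦcR : ∀ m : Fin 3, Phi K (cR m) = cq K m := by
    intro m
    have : ∀ x : K, Phi K (cR m) x = cq K m x := by
      intro x
      rw [Phi_apply, cq_apply, ← Quaternion.algebraMap_def]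
      exact Algebra.algebraMap_eq_smul_one _
    exact ContinuousMap.ext this
  have hBA : B ≤ A.comap (Phi K) := by
    rw [show B = Algebra.adjoin ℝ (Set.range cR) from rfl, Algebra.adjoin_le_iff]
    rintro _ ⟨m, rfl⟩
    simp only [SetLike.mem_coe, Subalgebra.mem_comap]
    rw [hΦcR m]
    exact cq_mem K m
  have hKey : ∀ g : C(K, ℝ), Phi K g ∈ closure (A : Set C(K, Quat)) := by
    intro g
    have hg : g ∈ closure (B : Set C(K, ℝ)) := by
      have : g ∈ B.topologicalClosure := by rw [hB]; trivial
      rwa [← Subalgebra.topologicalClosure_coe]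
    have h1 : Phi K g ∈ closure (Phi K '' (B : Set C(K, ℝ))) :=
      (image_closure_subset_closure_image (Phi_continuous K)) ⟨g, hg, rfl⟩
    refine closure_mono ?_ h1
    rintro _ ⟨b, hb, rfl⟩
    exact hBA hb
  -- now decompose an arbitrary continuous map
  rw [dense_iff_closure_eq, Set.eq_univ_iff_forall]
  intro f
  let g0 : C(K, ℝ) := ⟨fun x => (f x).re, Quaternion.continuous_re.comp f.continuous⟩
  let g1 : C(K, ℝ) := ⟨fun x => (f x).imI, Quaternion.continuous_imI.comp f.continuous⟩
  let g2 : C(K, ℝ) := ⟨fun x => (f x).imJ, Quaternion.continuous_imJ.comp f.continuous⟩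
  let g3 : C(K, ℝ) := ⟨fun x => (f x).imK, Quaternion.continuous_imK.comp f.continuous⟩
  have hf : f = Phi K g0 + Phi K g1 * ContinuousMap.const K qi +
      Phi K g2 * ContinuousMap.const K qj + Phi K g3 * ContinuousMap.const K qk := by
    refine ContinuousMap.ext fun x => ?_
    simp only [ContinuousMap.mul_apply, ContinuousMap.add_apply, ContinuousMap.const_apply]
    open scoped Quaternion QuaternionAlgebra in
    apply Quaternion.ext <;> simp [Phi_apply, qi_parts, qj_parts, qk_parts, g0, g1, g2, g3]
  rw [hf]
  have hT : IsClosed (closure (A : Set C(K, Quat))) := isClosed_closure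
  have hTsub : (A.topologicalClosure : Set C(K, Quat)) = closure (A : Set C(K, Quat)) :=
    Subalgebra.topologicalClosure_coe A
  have hmem : ∀ c : Quat, ContinuousMap.const K c ∈ A.topologicalClosure := fun c =>
    A.le_topologicalClosure (Algebra.subset_adjoin (const_mem_mon K c))
  have hΦT : ∀ g : C(K, ℝ), Phi K g ∈ A.topologicalClosure := by
    intro g
    have := hKey g
    rwa [← hTsub] at this
  have : Phi K g0 + Phi K g1 * ContinuousMap.const K qi +
      Phi K g2 * ContinuousMap.const K qj + Phi K g3 * ContinuousMap.const K qk ∈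
      A.topologicalClosure :=
    add_mem (add_mem (add_mem (hΦT g0) (mul_mem (hΦT g1) (hmem qi)))
      (mul_mem (hΦT g2) (hmem qj))) (mul_mem (hΦT g3) (hmem qk))
  rw [← hTsub]
  exact this

end
end

section
/- Let U ⊆ ℝ³ be open and let f : ℝ³ → ℍ be monogenic on U and twice continuously differentiable on U. Then f is harmonic on U: for every x ∈ U, the sum over m = 0, 1, 2 of (fderiv ℝ (fun y => (fderiv ℝ f y) e_m) x) e_m equals 0. In particular each of the four real component functions of f is a harmonic function on U. (The paper's claim that each graded component of a monogenic spinor field is harmonic, since ∇² is the Laplace–Beltrami operator.) -/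
open Topology
set_option synthInstance.maxHeartbeats 1000000
set_option maxHeartbeats 1000000


noncomputable section

/-- Monogenic fields are harmonic. -/
theorem monogenic_is_harmonic (U : Set R3) (hU : IsOpen U) (f : R3 → Quat)
    (hf : MonogenicOn f U) (hf2 : ContDiffOn ℝ 2 f U) :
    ∀ x ∈ U, (∑ m : Fin 3, fderiv ℝ (fun y => fderiv ℝ f y (e m)) x (e m)) = 0 := by
  intro x hx
  have hF1 : ContDiffOn ℝ 1 (fderiv ℝ f) U := by
    have := (contDiffOn_succ_iff_fderiv_of_isOpen (n := 1) hU).1 (by exact_mod_cast hf2)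
    exact this.2.2
  have hFd : DifferentiableAt ℝ (fderiv ℝ f) x :=
    ((hF1.differentiableOn one_ne_zero) x hx).differentiableAt (hU.mem_nhds hx)
  set f'' := fderiv ℝ (fderiv ℝ f) x with hf''
  have hF'' : HasFDerivAt (fderiv ℝ f) f'' x := hFd.hasFDerivAt
  have hev : ∀ᶠ y in 𝓝 x, HasFDerivAt f (fderiv ℝ f y) y := by
    filter_upwards [hU.mem_nhds hx] with y hy using ((hf y hy).1).hasFDerivAt
  have hsym : ∀ v w, f'' v w = f'' w v := fun v w =>
    second_derivative_symmetric_of_eventually hev hF'' v w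
  -- derivative of y ↦ fderiv f y (e m)
  have happ : ∀ m : Fin 3, HasFDerivAt (fun y => fderiv ℝ f y (e m)) (f''.flip (e m)) x := by
    intro m
    have := hF''.clm_apply (hasFDerivAt_const (e m) x)
    simpa using this
  have hgm : ∀ m : Fin 3, fderiv ℝ (fun y => fderiv ℝ f y (e m)) x (e m) = f'' (e m) (e m) := by
    intro m
    rw [(happ m).fderiv]
    rfl
  -- the monogenic equation differentiated
  have hGeq : ∀ v : R3, f'' v (e 0) + qk * f'' v (e 1) + qj * f'' v (e 2) = 0 := by
    have hG : HasFDerivAt (fun y => fderiv ℝ f y (e 0) + qk * fderiv ℝ f y (e 1)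
        + qj * fderiv ℝ f y (e 2))
        (f''.flip (e 0) + qk • f''.flip (e 1) + qj • f''.flip (e 2)) x :=
      ((happ 0).add ((happ 1).const_mul qk)).add ((happ 2).const_mul qj)
    have hG0 : HasFDerivAt (fun y => fderiv ℝ f y (e 0) + qk * fderiv ℝ f y (e 1)
        + qj * fderiv ℝ f y (e 2)) (0 : R3 →L[ℝ] Quat) x := by
      apply (hasFDerivAt_const (0 : Quat) x).congr_of_eventuallyEq
      filter_upwards [hU.mem_nhds hx] with y hy using (hf y hy).2
    have := hG.unique hG0
    intro v
    have := congrArg (fun (L : R3 →L[ℝ] Quat) => L v) this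
    simpa [smul_eq_mul] using this
  -- assemble
  have h0 := hGeq (e 0)
  have h1 := hGeq (e 1)
  have h2 := hGeq (e 2)
  have hkk : qk * qk = -1 := by ext <;> simp only [Quaternion.re_add, Quaternion.imI_add, Quaternion.imJ_add, Quaternion.imK_add, Quaternion.re_neg, Quaternion.imI_neg, Quaternion.imJ_neg, Quaternion.imK_neg, Quaternion.re_one, Quaternion.imI_one, Quaternion.imJ_one, Quaternion.imK_one, Quaternion.re_zero, Quaternion.imI_zero, Quaternion.imJ_zero, Quaternion.imK_zero, Quaternion.re_mul, Quaternion.imI_mul, Quaternion.imJ_mul, Quaternion.imK_mul] <;> simp [qk]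
  have hjj : qj * qj = -1 := by ext <;> simp only [Quaternion.re_add, Quaternion.imI_add, Quaternion.imJ_add, Quaternion.imK_add, Quaternion.re_neg, Quaternion.imI_neg, Quaternion.imJ_neg, Quaternion.imK_neg, Quaternion.re_one, Quaternion.imI_one, Quaternion.imJ_one, Quaternion.imK_one, Quaternion.re_zero, Quaternion.imI_zero, Quaternion.imJ_zero, Quaternion.imK_zero, Quaternion.re_mul, Quaternion.imI_mul, Quaternion.imJ_mul, Quaternion.imK_mul] <;> simp [qj]
  have hkj : qk * qj + qj * qk = 0 := by ext <;> simp only [Quaternion.re_add, Quaternion.imI_add, Quaternion.imJ_add, Quaternion.imK_add, Quaternion.re_neg, Quaternion.imI_neg, Quaternion.imJ_neg, Quaternion.imK_neg, Quaternion.re_one, Quaternion.imI_one, Quaternion.imJ_one, Quaternion.imK_one, Quaternion.re_zero, Quaternion.imI_zero, Quaternion.imJ_zero, Quaternion.imK_zero, Quaternion.re_mul, Quaternion.imI_mul, Quaternion.imJ_mul, Quaternion.imK_mul] <;> simp [qj, qk]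
  rw [Fin.sum_univ_three, hgm 0, hgm 1, hgm 2]
  rw [add_assoc] at h0 h1 h2
  have e00 : f'' (e 0) (e 0) = -(qk * f'' (e 0) (e 1) + qj * f'' (e 0) (e 2)) :=
    eq_neg_of_add_eq_zero_left h0
  rw [e00, hsym (e 0) (e 1), hsym (e 0) (e 2)]
  have e10 : f'' (e 1) (e 0) = -(qk * f'' (e 1) (e 1) + qj * f'' (e 1) (e 2)) :=
    eq_neg_of_add_eq_zero_left h1
  have e20 : f'' (e 2) (e 0) = -(qk * f'' (e 2) (e 1) + qj * f'' (e 2) (e 2)) :=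
    eq_neg_of_add_eq_zero_left h2
  rw [e10, e20, hsym (e 2) (e 1)]
  set A := f'' (e 1) (e 1)
  set B := f'' (e 2) (e 2)
  set C := f'' (e 1) (e 2)
  calc -(qk * -(qk * A + qj * C) + qj * -(qk * C + qj * B)) + A + B
      = (qk * qk) * A + (qk * qj + qj * qk) * C + (qj * qj) * B + A + B := by noncomm_ring
    _ = 0 := by rw [hkk, hjj, hkj]; noncomm_ring


end
end
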